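/- Let $X$ be a compact metric space, $f:X\to X$ continuous, $x\in X$, and $\mu$ a Borel probability measure on $X$. If $\frac{1}{n}\sum_{i=0}^{n-1}\delta_{f^i(x)}$ converges to $\mu$ in the weak* topology, then $\overline{\omega}(x,f)=\operatorname{supp}(\mu)$. -/

import Mathlib

open Filter Metric Set
open scoped Classical Topology

noncomputable def upperDensity (A : Set ℕ) : ℝ :=
  Filter.limsup
    (fun n : ℕ => (((Finset.range n).filter (fun i => i ∈ A)).card : ℝ) / n) Filter.atTop

def HasDensityOne (A : Set ℕ) : Prop :=
  Filter.Tendsto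
    (fun n : ℕ => (((Finset.range n).filter (fun i => i ∈ A)).card : ℝ) / n) Filter.atTop (nhds 1)

def omegaBarSeq {X : Type*} [MetricSpace X] (x : ℕ → X) : Set X :=
  {y | ∀ ε > 0, 0 < upperDensity {i | dist (x i) y < ε}}

def omegaBar {X : Type*} [MetricSpace X] (f : X → X) (x : X) : Set X :=
  omegaBarSeq (fun i => f^[i] x)

section aux

open MeasureTheory

variable {X : Type*} [MetricSpace X] [CompactSpace X]
    [MeasurableSpace X] [BorelSpace X]

lemma exists_ury (y : X) {r R : ℝ} (hrR : r < R) :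
    ∃ g : C(X, ℝ), (∀ z ∈ Metric.closedBall y r, g z = 1) ∧
      (∀ z ∉ Metric.ball y R, g z = 0) ∧ ∀ z, g z ∈ Icc (0:ℝ) 1 := by
  obtain ⟨g, hg0, hg1, hg01⟩ := exists_continuous_zero_one_of_isClosed
    (Metric.isOpen_ball (x := y) (ε := R)).isClosed_compl Metric.isClosed_closedBall
    (by
      rw [Set.disjoint_compl_left_iff_subset]
      exact Metric.closedBall_subset_ball hrR)
  exact ⟨g, fun z hz => hg1 hz, fun z hz => hg0 hz, hg01⟩

variable (f : X → X) (x : X)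
    (μ : MeasureTheory.Measure X) [MeasureTheory.IsProbabilityMeasure μ]
    (h : ∀ g : C(X, ℝ),
      Filter.Tendsto (fun n : ℕ => (∑ i ∈ Finset.range n, g (f^[i] x)) / n)
        Filter.atTop (nhds (∫ z, g z ∂μ)))

include h

lemma upperDensity_le (y : X) {r R : ℝ} (hrR : r < R) :
    upperDensity {i | dist (f^[i] x) y < r} ≤ (μ (Metric.ball y R)).toReal := by
  obtain ⟨g, hg1, hg0, hg01⟩ := exists_ury y hrR
  have hgint : Integrable (fun z => g z) μ :=
    g.continuous.integrable_of_hasCompactSupport (HasCompactSupport.of_compactSpace _)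
  have hindint : Integrable ((Metric.ball y R).indicator (fun _ => (1:ℝ))) μ :=
    (integrable_const (1:ℝ)).indicator measurableSet_ball
  have hint : ∫ z, g z ∂μ ≤ (μ (Metric.ball y R)).toReal := by
    have hle := integral_mono hgint hindint (fun z => by
      by_cases hz : z ∈ Metric.ball y R
      · simp only [Set.indicator_of_mem hz]; exact (hg01 z).2
      · simp only [Set.indicator_of_notMem hz]; exact le_of_eq (hg0 z hz))
    rwa [integral_indicator_const (1:ℝ) measurableSet_ball, smul_eq_mul, mul_one] at hle
  have hcmp : ∀ n : ℕ, 0 < n →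
      (((Finset.range n).filter (fun i => i ∈ {i | dist (f^[i] x) y < r})).card : ℝ) / n ≤
      (∑ i ∈ Finset.range n, g (f^[i] x)) / n := by
    intro n hn
    have hnum : (((Finset.range n).filter (fun i => i ∈ {i | dist (f^[i] x) y < r})).card : ℝ)
        ≤ ∑ i ∈ Finset.range n, g (f^[i] x) := by
      rw [← Finset.sum_boole]
      refine Finset.sum_le_sum fun i _ => ?_
      by_cases hi : i ∈ {i | dist (f^[i] x) y < r}
      · simp only [hi, if_true]
        exact le_of_eq (hg1 _ (Metric.mem_closedBall.mpr (le_of_lt hi))).symm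
      · simp only [hi, if_false]
        exact (hg01 _).1
    exact div_le_div_of_nonneg_right hnum (Nat.cast_nonneg n)
  calc upperDensity {i | dist (f^[i] x) y < r}
      ≤ Filter.limsup (fun n : ℕ => (∑ i ∈ Finset.range n, g (f^[i] x)) / n) Filter.atTop := by
        refine Filter.limsup_le_limsup ?_ ?_ ?_
        · filter_upwards [Filter.eventually_gt_atTop 0] with n hn using hcmp n hn
        · exact Filter.IsBoundedUnder.isCoboundedUnder_le
            (Filter.isBoundedUnder_of ⟨0, fun n => by positivity⟩)
        · exact (h g).isBoundedUnder_le
    _ = ∫ z, g z ∂μ := (h g).limsup_eq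
    _ ≤ (μ (Metric.ball y R)).toReal := hint

lemma le_upperDensity (y : X) {r R : ℝ} (hrR : r < R) :
    (μ (Metric.ball y r)).toReal ≤ upperDensity {i | dist (f^[i] x) y < R} := by
  obtain ⟨g, hg1, hg0, hg01⟩ := exists_ury y hrR
  have hgint : Integrable (fun z => g z) μ :=
    g.continuous.integrable_of_hasCompactSupport (HasCompactSupport.of_compactSpace _)
  have hindint : Integrable ((Metric.ball y r).indicator (fun _ => (1:ℝ))) μ :=
    (integrable_const (1:ℝ)).indicator measurableSet_ball
  have hint : (μ (Metric.ball y r)).toReal ≤ ∫ z, g z ∂μ := by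
    have hle := integral_mono hindint hgint (fun z => by
      by_cases hz : z ∈ Metric.ball y r
      · simp only [Set.indicator_of_mem hz]
        exact le_of_eq (hg1 _ (Metric.ball_subset_closedBall hz)).symm
      · simp only [Set.indicator_of_notMem hz]; exact (hg01 z).1)
    rwa [integral_indicator_const (1:ℝ) measurableSet_ball, smul_eq_mul, mul_one] at hle
  have hcmp : ∀ n : ℕ, 0 < n →
      (∑ i ∈ Finset.range n, g (f^[i] x)) / n ≤
      (((Finset.range n).filter (fun i => i ∈ {i | dist (f^[i] x) y < R})).card : ℝ) / n := by
    intro n hn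
    have hnum : (∑ i ∈ Finset.range n, g (f^[i] x)) ≤
        (((Finset.range n).filter (fun i => i ∈ {i | dist (f^[i] x) y < R})).card : ℝ) := by
      rw [← Finset.sum_boole]
      refine Finset.sum_le_sum fun i _ => ?_
      by_cases hi : i ∈ {i | dist (f^[i] x) y < R}
      · simp only [hi, if_true]; exact (hg01 _).2
      · simp only [hi, if_false]
        exact le_of_eq (hg0 _ (fun hb => hi hb))
    exact div_le_div_of_nonneg_right hnum (Nat.cast_nonneg n)
  calc (μ (Metric.ball y r)).toReal ≤ ∫ z, g z ∂μ := hint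
    _ = Filter.limsup (fun n : ℕ => (∑ i ∈ Finset.range n, g (f^[i] x)) / n) Filter.atTop :=
        ((h g).limsup_eq).symm
    _ ≤ upperDensity {i | dist (f^[i] x) y < R} := by
        refine Filter.limsup_le_limsup ?_ ?_ ?_
        · filter_upwards [Filter.eventually_gt_atTop 0] with n hn using hcmp n hn
        · exact (h g).isBoundedUnder_ge.isCoboundedUnder_le
        · refine Filter.isBoundedUnder_of ⟨1, fun n => ?_⟩
          rcases Nat.eq_zero_or_pos n with rfl | hn
          · simp
          · rw [div_le_one (by exact_mod_cast hn)]
            exact_mod_cast (Finset.card_filter_le _ _).trans_eq (Finset.card_range n)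

end aux

theorem stmt5 {X : Type*} [MetricSpace X] [CompactSpace X]
    [MeasurableSpace X] [BorelSpace X]
    (f : X → X) (hf : Continuous f) (x : X)
    (μ : MeasureTheory.Measure X) [MeasureTheory.IsProbabilityMeasure μ]
    (h : ∀ g : C(X, ℝ),
      Filter.Tendsto (fun n : ℕ => (∑ i ∈ Finset.range n, g (f^[i] x)) / n)
        Filter.atTop (nhds (∫ z, g z ∂μ))) :
    omegaBar f x = {y : X | ∀ ε > 0, 0 < μ (Metric.ball y ε)} := by
  ext y
  simp only [omegaBar, omegaBarSeq, Set.mem_setOf_eq]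
  constructor
  · intro hy ε hε
    have h1 := hy (ε/2) (by positivity)
    have h2 := upperDensity_le f x μ h y (show ε/2 < ε by linarith)
    have h3 : 0 < (μ (Metric.ball y ε)).toReal := h1.trans_le h2
    exact (ENNReal.toReal_pos_iff.mp h3).1
  · intro hy ε hε
    have h1 := hy (ε/2) (by positivity)
    have h2 := le_upperDensity f x μ h y (show ε/2 < ε by linarith)
    exact lt_of_lt_of_le (ENNReal.toReal_pos h1.ne' (MeasureTheory.measure_ne_top μ _)) h2
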